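/- Let X, Y be complex Hilbert spaces and Yₙ a finite-dimensional complex inner product space, T : X → Y and Tₙ : X → Yₙ bounded linear operators. Let x† ∈ X, and suppose: (i) x† = φ(T*T)u for some u ∈ X, where φ : [0,∞) → ℝ is continuous with φ(0) = 0 and φ(λ) > 0 for λ > 0, and α·φ(λ)/(λ+α) ≤ c₀·φ(α) for all α, λ > 0 with a constant c₀ > 0; (ii) ε > 0 satisfies ‖T*T − Tₙ*Tₙ‖ ≤ ε; (iii) σ > 0 satisfies ‖Tₙ w‖ ≥ σ‖w‖ for all w in the orthogonal complement of ker Tₙ; (iv) x_n† and x̃_n† lie in the orthogonal complement of ker Tₙ with Tₙ x_n† = Tₙ x† and Tₙ x̃_n† = ỹₙ, where ‖Tₙ x† − ỹₙ‖ ≤ δ with δ ≤ σ·φ(ε). Then ‖x† − x̃_n†‖ ≤ (2c₀‖u‖ + 1)·φ(ε). -/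

import Mathlib

open ContinuousLinearMap

theorem noisy_discrete_regularization_total_error
    {X Y Yn : Type*} [NormedAddCommGroup X] [InnerProductSpace ℂ X] [CompleteSpace X]
    [NormedAddCommGroup Y] [InnerProductSpace ℂ Y] [CompleteSpace Y]
    [NormedAddCommGroup Yn] [InnerProductSpace ℂ Yn] [FiniteDimensional ℂ Yn]
    (T : X →L[ℂ] Y) (Tn : X →L[ℂ] Yn) (xdag : X)
    (φ : ℝ → ℝ) (hφcont : ContinuousOn φ (Set.Ici 0)) (hφ0 : φ 0 = 0)
    (hφpos : ∀ l > (0 : ℝ), 0 < φ l)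
    (c₀ : ℝ) (hc₀ : 0 < c₀)
    (hsrc : ∀ α > (0 : ℝ), ∀ l > (0 : ℝ), α * φ l / (l + α) ≤ c₀ * φ α)
    (u : X) (hu : xdag = cfc φ (adjoint T ∘L T) u)
    (ε : ℝ) (hε : 0 < ε)
    (hnorm : ‖(adjoint T ∘L T) - (adjoint Tn ∘L Tn)‖ ≤ ε)
    (σ : ℝ) (hσpos : 0 < σ)
    (hσ : ∀ w ∈ (LinearMap.ker (Tn : X →ₗ[ℂ] Yn))ᗮ, σ * ‖w‖ ≤ ‖Tn w‖)
    (xndag xtil : X)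
    (hmem : xndag ∈ (LinearMap.ker (Tn : X →ₗ[ℂ] Yn))ᗮ) (hmem' : xtil ∈ (LinearMap.ker (Tn : X →ₗ[ℂ] Yn))ᗮ)
    (ytil : Yn) (heq : Tn xndag = Tn xdag) (heq' : Tn xtil = ytil)
    (δ : ℝ) (hδ : ‖Tn xdag - ytil‖ ≤ δ) (hδσ : δ ≤ σ * φ ε) :
    ‖xdag - xtil‖ ≤ (2 * c₀ * ‖u‖ + 1) * φ ε := by
  have hφε : 0 < φ ε := hφpos ε hε
  -- Part 1 : ‖xndag - xtil‖ ≤ φ ε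
  have h1 : ‖xndag - xtil‖ ≤ φ ε := by
    have hw : xndag - xtil ∈ (LinearMap.ker (Tn : X →ₗ[ℂ] Yn))ᗮ := Submodule.sub_mem _ hmem hmem'
    have : σ * ‖xndag - xtil‖ ≤ σ * φ ε := by
      calc σ * ‖xndag - xtil‖ ≤ ‖Tn (xndag - xtil)‖ := hσ _ hw
        _ = ‖Tn xdag - ytil‖ := by rw [map_sub, heq, heq']
        _ ≤ δ := hδ
        _ ≤ σ * φ ε := hδσ
    exact le_of_mul_le_mul_left this hσpos
  -- the operators
  set K := LinearMap.ker (Tn : X →ₗ[ℂ] Yn) with hK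
  haveI : CompleteSpace K := Tn.isClosed_ker.completeSpace_coe
  set Q : X →L[ℂ] X := K.subtypeL ∘L K.orthogonalProjectionOnto with hQ
  set a : X →L[ℂ] X := adjoint T ∘L T with ha
  set b : X →L[ℂ] X := adjoint Tn ∘L Tn with hb
  have haSA : IsSelfAdjoint a := by
    rw [IsSelfAdjoint, ContinuousLinearMap.star_eq_adjoint, ha, adjoint_comp, adjoint_adjoint]
  have haPos : (0 : X →L[ℂ] X) ≤ a := by
    refine (ContinuousLinearMap.nonneg_iff_isPositive a).mpr ⟨ContinuousLinearMap.isSelfAdjoint_iff_isSymmetric.mp haSA, fun x => ?_⟩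
    rw [reApplyInnerSelf_apply, ha, comp_apply, adjoint_inner_left]
    exact inner_self_nonneg
  have hspec : spectrum ℝ a ⊆ Set.Ici 0 := fun x hx => spectrum_nonneg_of_nonneg haPos hx
  -- Q annihilates b from the left
  have hbQ : b ∘L Q = 0 := by
    ext x
    have : Q x ∈ K := Subtype.coe_prop _
    simp only [comp_apply, hb, zero_apply]
    rw [show Tn (Q x) = 0 from this, map_zero]
  have hQSA : IsSelfAdjoint Q := isSelfAdjoint_starProjection K
  have hQb : Q ∘L b = 0 := by
    have hbSA : IsSelfAdjoint b := by
      rw [IsSelfAdjoint, ContinuousLinearMap.star_eq_adjoint, hb, adjoint_comp, adjoint_adjoint]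
    have := congrArg star hbQ
    rwa [← ContinuousLinearMap.mul_def, star_mul, hQSA.star_eq, hbSA.star_eq, star_zero,
      ContinuousLinearMap.mul_def] at this
  have hQnorm : ∀ x : X, ‖Q x‖ ≤ ‖x‖ := by
    intro x
    calc ‖Q x‖ = ‖K.orthogonalProjectionOnto x‖ := rfl
      _ ≤ ‖K.orthogonalProjectionOnto‖ * ‖x‖ := (K.orthogonalProjectionOnto).le_opNorm x
      _ ≤ 1 * ‖x‖ := mul_le_mul_of_nonneg_right (Submodule.orthogonalProjectionOnto_norm_le K) (norm_nonneg x)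
      _ = ‖x‖ := one_mul _
  have hQop : ‖Q‖ ≤ 1 := opNorm_le_bound _ zero_le_one fun x => by rw [one_mul]; exact hQnorm x
  -- function pieces
  set g : ℝ → ℝ := fun l => φ l / (l + ε) with hgdef
  set h : ℝ → ℝ := fun l => ε * (φ l / (l + ε)) with hhdef
  have hgc : ContinuousOn g (spectrum ℝ a) := by
    apply ContinuousOn.div (hφcont.mono hspec)
      ((continuous_id.add continuous_const).continuousOn)
    intro x hx
    have hx0 : 0 ≤ x := hspec hx
    show x + ε ≠ 0
    positivity
  have hhc : ContinuousOn h (spectrum ℝ a) := continuousOn_const.mul hgc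
  have hφc : ContinuousOn φ (spectrum ℝ a) := hφcont.mono hspec
  have hsplit : cfc φ a = a * cfc g a + cfc h a := by
    have e1 : cfc φ a = cfc (fun l => l * g l + h l) a := by
      apply cfc_congr
      intro x hx
      have hx0 : 0 <= x := hspec hx
      have hxε : x + ε ≠ 0 := by positivity
      simp only [hgdef, hhdef]
      field_simp
    rw [e1, cfc_add a _ _ (by exact (continuousOn_id.mul hgc)) hhc,
      cfc_mul (fun l : ℝ => l) g a continuousOn_id hgc, cfc_id' ℝ a]
  -- norm bounds on the cfc pieces
  have hga : ‖cfc g a‖ ≤ c₀ * φ ε / ε := by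
    apply norm_cfc_le (by positivity)
    intro x hx
    have hx0 : 0 ≤ x := hspec hx
    have hxε : 0 < x + ε := by positivity
    rcases hx0.eq_or_lt with rfl | hxpos
    · simp [hgdef, hφ0]
      positivity
    · have hb1 : ε * φ x / (x + ε) ≤ c₀ * φ ε := hsrc ε hε x hxpos
      have hgx : 0 ≤ g x := by
        have := (hφpos x hxpos).le
        simp only [hgdef]
        positivity
      rw [Real.norm_of_nonneg hgx, le_div_iff₀ hε]
      calc g x * ε = ε * φ x / (x + ε) := by simp only [hgdef]; ring
        _ ≤ c₀ * φ ε := hb1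
  have hha : ‖cfc h a‖ ≤ c₀ * φ ε := by
    apply norm_cfc_le (by positivity)
    intro x hx
    have hx0 : 0 ≤ x := hspec hx
    have hxε : 0 < x + ε := by positivity
    rcases hx0.eq_or_lt with rfl | hxpos
    · simp [hhdef, hφ0]
      positivity
    · have hb1 : ε * φ x / (x + ε) ≤ c₀ * φ ε := hsrc ε hε x hxpos
      have hhx : 0 ≤ h x := by
        have := (hφpos x hxpos).le
        simp only [hhdef]
        positivity
      rw [Real.norm_of_nonneg hhx]
      calc h x = ε * φ x / (x + ε) := by rw [hhdef]; ring
        _ ≤ c₀ * φ ε := hb1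
  -- xdag - xndag = Q xdag
  have hker : xdag - xndag ∈ K := by
    rw [hK, LinearMap.mem_ker, map_sub, ContinuousLinearMap.coe_coe, heq, sub_self]
  have e1 : Q (xdag - xndag) = xdag - xndag := by
    simp only [hQ, comp_apply, Submodule.subtypeL_apply]
    exact (Submodule.starProjection_eq_self_iff (K := K)).mpr hker
  have e2 : Q xndag = 0 := by
    simp only [hQ, comp_apply, Submodule.subtypeL_apply,
      Submodule.orthogonalProjectionOnto_apply_of_mem_orthogonal hmem,
      Submodule.coe_zero]
  have h2 : xdag - xndag = Q xdag := by
    conv_rhs => rw [show xdag = (xdag - xndag) + xndag by abel]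
    rw [map_add, e1, e2, add_zero]
  -- operator estimate
  have hQcfc : ‖Q * cfc φ a‖ ≤ 2 * c₀ * φ ε := by
    have key : Q * cfc φ a = (Q * (a - b)) * cfc g a + Q * cfc h a := by
      rw [hsplit, mul_add, mul_sub, show Q * b = 0 from hQb, sub_zero, mul_assoc]
    rw [key]
    have n1 : ‖Q * (a - b)‖ ≤ ε := by
      calc ‖Q * (a - b)‖ ≤ ‖Q‖ * ‖a - b‖ := norm_mul_le _ _
        _ ≤ 1 * ε := mul_le_mul hQop hnorm (norm_nonneg _) zero_le_one
        _ = ε := one_mul _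
    calc ‖(Q * (a - b)) * cfc g a + Q * cfc h a‖
        ≤ ‖(Q * (a - b)) * cfc g a‖ + ‖Q * cfc h a‖ := norm_add_le _ _
      _ ≤ ‖Q * (a - b)‖ * ‖cfc g a‖ + ‖Q‖ * ‖cfc h a‖ :=
          add_le_add (norm_mul_le _ _) (norm_mul_le _ _)
      _ ≤ ε * (c₀ * φ ε / ε) + 1 * (c₀ * φ ε) := by
          apply add_le_add
          · exact mul_le_mul n1 hga (norm_nonneg _) hε.le
          · exact mul_le_mul hQop hha (norm_nonneg _) zero_le_one
      _ = 2 * c₀ * φ ε := by field_simp; ring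
  have h3 : ‖xdag - xndag‖ ≤ 2 * c₀ * φ ε * ‖u‖ := by
    rw [h2, hu]
    calc ‖Q (cfc φ a u)‖ = ‖(Q * cfc φ a) u‖ := rfl
      _ ≤ ‖Q * cfc φ a‖ * ‖u‖ := le_opNorm _ _
      _ ≤ 2 * c₀ * φ ε * ‖u‖ := mul_le_mul_of_nonneg_right hQcfc (norm_nonneg _)
  calc ‖xdag - xtil‖ = ‖(xdag - xndag) + (xndag - xtil)‖ := by abel_nf
    _ ≤ ‖xdag - xndag‖ + ‖xndag - xtil‖ := norm_add_le _ _
    _ ≤ 2 * c₀ * φ ε * ‖u‖ + φ ε := add_le_add h3 h1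
    _ = (2 * c₀ * ‖u‖ + 1) * φ ε := by ring
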